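/- Define the rising diagonal sums d(n) = Σ_{k=0}^{⌊n/2⌋} A(n−k,k) of the binary binomial interpolated triangle, and set D(n) = −d(n) + α·d(n-1) + β·d(n-2) for n ≥ 2. Then for all n ≥ 6: D(n) = 𝓐·D(n-2) + 𝓑·D(n-4), where 𝓐 = uα+2v and 𝓑 = u²β−uvα−v². Moreover, for even n = 2k with k ≥ 1, D(2k) = −A(k,k). -/

import Mathlib

theorem stmt_12 (u v α β : ℝ) (hu : u ≠ 0) (hv : v ≠ 0) (hα : α ≠ 0) (hβ : β ≠ 0)
    (a : ℕ → ℝ) (ha : ∀ n, 2 ≤ n → a n = α * a (n-1) + β * a (n-2))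
    (A : ℕ → ℕ → ℝ) (hA0 : ∀ n, A n 0 = a n)
    (hA : ∀ n k, 1 ≤ k → k ≤ n → A n k = u * A n (k-1) + v * A (n-1) (k-1))
    (d : ℕ → ℝ) (hd : ∀ n, d n = ∑ k ∈ Finset.range (n/2 + 1), A (n-k) k)
    (D : ℕ → ℝ) (hD : ∀ n, 2 ≤ n → D n = -d n + α * d (n-1) + β * d (n-2)) :
    (∀ n, 6 ≤ n →
      D n = (u*α + 2*v) * D (n-2) + (u^2*β - u*v*α - v^2) * D (n-4)) ∧
    (∀ k, 1 ≤ k → D (2*k) = -A k k) := by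
  -- columns satisfy the a-recurrence
  have key : ∀ k n : ℕ, k + 2 ≤ n → A n k = α * A (n-1) k + β * A (n-2) k := by
    intro k
    induction k with
    | zero =>
      intro n hn
      simp only [hA0]
      exact ha n (by omega)
    | succ k ih =>
      intro n hn
      have r1 := hA n (k+1) (by omega) (by omega)
      have r2 := hA (n-1) (k+1) (by omega) (by omega)
      have r3 := hA (n-2) (k+1) (by omega) (by omega)
      rw [Nat.add_sub_cancel] at r1 r2 r3
      rw [show n-1-1 = n-2 by omega] at r2
      rw [show n-2-1 = n-3 by omega] at r3
      have i1 := ih n (by omega)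
      have i2 := ih (n-1) (by omega)
      rw [show n-1-1 = n-2 by omega, show n-1-2 = n-3 by omega] at i2
      rw [r1, r2, r3]
      linear_combination u * i1 + v * i2
  -- the two diagonal sequences B m = A m m, C m = A (m+1) m
  have eq1 : ∀ m : ℕ, A (m+1) (m+1) = u * A (m+1) m + v * A m m := by
    intro m
    have h := hA (m+1) (m+1) (by omega) (le_refl _)
    rw [show m+1-1 = m from rfl] at h
    exact h
  have eq2 : ∀ m : ℕ, A (m+2) (m+1) = u*β * A m m + (u*α+v) * A (m+1) m := by
    intro m
    have h := hA (m+2) (m+1) (by omega) (by omega)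
    rw [show m+1-1 = m from rfl, show m+2-1 = m+1 from rfl] at h
    have h2 := key m (m+2) (by omega)
    rw [show m+2-1 = m+1 from rfl, show m+2-2 = m from rfl] at h2
    linear_combination h + u * h2
  have hBrec : ∀ m : ℕ, A (m+2) (m+2) =
      (u*α + 2*v) * A (m+1) (m+1) + (u^2*β - u*v*α - v^2) * A m m := by
    intro m
    have e := eq1 (m+1)
    rw [show m+1+1 = m+2 from rfl] at e
    linear_combination e + u * eq2 m - (u*α+v) * eq1 m
  have hCrec : ∀ m : ℕ, A (m+3) (m+2) =
      (u*α + 2*v) * A (m+2) (m+1) + (u^2*β - u*v*α - v^2) * A (m+1) m := by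
    intro m
    have e := eq2 (m+1)
    rw [show m+1+2 = m+3 from rfl, show m+1+1 = m+2 from rfl] at e
    linear_combination e + u*β * eq1 m - v * eq2 m
  -- evaluation of D at even indices
  have hDeven : ∀ m : ℕ, 1 ≤ m → D (2*m) = -A m m := by
    intro m hm
    rw [hD (2*m) (by omega)]
    simp only [hd]
    rw [show 2*m/2+1 = m+1 by omega, show (2*m-1)/2+1 = m by omega,
      show (2*m-2)/2+1 = m by omega, Finset.sum_range_succ,
      show 2*m - m = m by omega]
    have hcong : ∑ k ∈ Finset.range m, A (2*m-k) k
        = ∑ k ∈ Finset.range m, (α * A (2*m-1-k) k + β * A (2*m-2-k) k) := by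
      refine Finset.sum_congr rfl ?_
      intro k hk
      simp only [Finset.mem_range] at hk
      have h := key k (2*m-k) (by omega)
      rw [show 2*m-k-1 = 2*m-1-k by omega, show 2*m-k-2 = 2*m-2-k by omega] at h
      exact h
    rw [hcong, Finset.sum_add_distrib, ← Finset.mul_sum, ← Finset.mul_sum]
    ring
  -- evaluation of D at odd indices
  have hDodd : ∀ m : ℕ, 1 ≤ m → D (2*m+1) = -A (m+1) m + α * A m m := by
    intro m hm
    rw [hD (2*m+1) (by omega)]
    simp only [hd]
    rw [show (2*m+1)/2+1 = m+1 by omega, show (2*m+1-1)/2+1 = m+1 by omega,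
      show (2*m+1-2)/2+1 = m by omega, Finset.sum_range_succ, Finset.sum_range_succ,
      show 2*m+1-m = m+1 by omega, show 2*m+1-1-m = m by omega]
    have hcong : ∑ k ∈ Finset.range m, A (2*m+1-k) k
        = ∑ k ∈ Finset.range m, (α * A (2*m+1-1-k) k + β * A (2*m+1-2-k) k) := by
      refine Finset.sum_congr rfl ?_
      intro k hk
      simp only [Finset.mem_range] at hk
      have h := key k (2*m+1-k) (by omega)
      rw [show 2*m+1-k-1 = 2*m+1-1-k by omega, show 2*m+1-k-2 = 2*m+1-2-k by omega] at h
      exact h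
    rw [hcong, Finset.sum_add_distrib, ← Finset.mul_sum, ← Finset.mul_sum]
    ring
  refine ⟨?_, fun k hk => hDeven k hk⟩
  intro n hn
  rcases Nat.even_or_odd n with he | ho
  · obtain ⟨r, hr⟩ := he
    obtain ⟨j, rfl⟩ : ∃ j, n = 2*j + 6 := ⟨r - 3, by omega⟩
    have h1 := hDeven (j+3) (by omega)
    have h2 := hDeven (j+2) (by omega)
    have h3 := hDeven (j+1) (by omega)
    rw [show 2*(j+3) = 2*j+6 by ring] at h1
    rw [show 2*(j+2) = 2*j+6-2 by omega] at h2
    rw [show 2*(j+1) = 2*j+6-4 by omega] at h3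
    rw [h1, h2, h3]
    have hb := hBrec (j+1)
    rw [show j+1+2 = j+3 from rfl, show j+1+1 = j+2 from rfl] at hb
    linear_combination -hb
  · obtain ⟨r, hr⟩ := ho
    obtain ⟨j, rfl⟩ : ∃ j, n = 2*j + 7 := ⟨r - 3, by omega⟩
    have h1 := hDodd (j+3) (by omega)
    have h2 := hDodd (j+2) (by omega)
    have h3 := hDodd (j+1) (by omega)
    rw [show 2*(j+3)+1 = 2*j+7 by omega] at h1
    rw [show 2*(j+2)+1 = 2*j+7-2 by omega] at h2
    rw [show 2*(j+1)+1 = 2*j+7-4 by omega] at h3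
    rw [show j+3+1 = j+4 from rfl] at h1
    rw [show j+2+1 = j+3 from rfl] at h2
    rw [show j+1+1 = j+2 from rfl] at h3
    rw [h1, h2, h3]
    have hb := hBrec (j+1)
    rw [show j+1+2 = j+3 from rfl, show j+1+1 = j+2 from rfl] at hb
    have hc := hCrec (j+1)
    rw [show j+1+3 = j+4 from rfl, show j+1+2 = j+3 from rfl, show j+1+1 = j+2 from rfl] at hc
    linear_combination α * hb - hc
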